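/- Let G = (U, W, E) be a bipartite graph and G' the graph obtained from G by, for each edge {u,v} ∈ E, adding a new vertex x_{uv} adjacent to both u and v. Then for every integer k, G has a vertex cover of size at most k if and only if G' has a feedback vertex set of size at most k. (This in fact holds for every simple graph G, not only bipartite.) -/

import Mathlib

open Sum

/-- A vertex cover of a simple graph. -/
def IsVertexCover {V : Type*} (G : SimpleGraph V) (S : Finset V) : Prop :=
  ∀ u v, G.Adj u v → u ∈ S ∨ v ∈ S

/-- The graph `G'` obtained from `G` by adding, for each edge `{u,v}` of `G`, a new
vertex adjacent to both `u` and `v`. -/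
def edgeGadget {V : Type*} (G : SimpleGraph V) : SimpleGraph (V ⊕ G.edgeSet) :=
  SimpleGraph.fromRel fun x y =>
    (∃ a b, x = Sum.inl a ∧ y = Sum.inl b ∧ G.Adj a b) ∨
    (∃ (a : V) (e : G.edgeSet), a ∈ (e : Sym2 V) ∧ x = Sum.inl a ∧ y = Sum.inr e)

lemma gadget_adj {V : Type*} {G : SimpleGraph V} {x y : V ⊕ G.edgeSet} :
    (edgeGadget G).Adj x y ↔
      (∃ a b, x = inl a ∧ y = inl b ∧ G.Adj a b) ∨
      (∃ (a : V) (e : G.edgeSet), a ∈ (e : Sym2 V) ∧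
        ((x = inl a ∧ y = inr e) ∨ (x = inr e ∧ y = inl a))) := by
  constructor
  · rintro ⟨hne, (⟨a, b, rfl, rfl, hab⟩ | ⟨a, e, hae, rfl, rfl⟩) |
      (⟨a, b, rfl, rfl, hab⟩ | ⟨a, e, hae, rfl, rfl⟩)⟩
    · exact Or.inl ⟨a, b, rfl, rfl, hab⟩
    · exact Or.inr ⟨a, e, hae, Or.inl ⟨rfl, rfl⟩⟩
    · exact Or.inl ⟨b, a, rfl, rfl, hab.symm⟩
    · exact Or.inr ⟨a, e, hae, Or.inr ⟨rfl, rfl⟩⟩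
  · rintro (⟨a, b, rfl, rfl, hab⟩ | ⟨a, e, hae, (⟨rfl, rfl⟩ | ⟨rfl, rfl⟩)⟩)
    · exact ⟨by simp [hab.ne], Or.inl (Or.inl ⟨a, b, rfl, rfl, hab⟩)⟩
    · exact ⟨by simp, Or.inl (Or.inr ⟨a, e, hae, rfl, rfl⟩)⟩
    · exact ⟨by simp, Or.inr (Or.inr ⟨a, e, hae, rfl, rfl⟩)⟩

/-- The start of a cycle has two distinct neighbors. -/
lemma cycle_two_neighbors {V : Type*} {G : SimpleGraph V} {w : V} {p : G.Walk w w}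
    (hp : p.IsCycle) : ∃ x y, x ≠ y ∧ G.Adj w x ∧ G.Adj w y := by
  cases p with
  | nil => exact absurd rfl hp.ne_nil
  | cons h q =>
    rename_i b
    rw [SimpleGraph.Walk.cons_isCycle_iff] at hp
    obtain ⟨hq, hew⟩ := hp
    have hnn : ¬ q.reverse.Nil := by
      rw [SimpleGraph.Walk.not_nil_iff_lt_length]
      simp only [SimpleGraph.Walk.length_reverse]
      by_contra hc
      push_neg at hc
      interval_cases hl : q.length
      exact h.ne' (SimpleGraph.Walk.eq_of_length_eq_zero hl)
    obtain ⟨y, h', q'', hrq⟩ := SimpleGraph.Walk.not_nil_iff.mp hnn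
    refine ⟨b, y, ?_, h, h'⟩
    rintro rfl
    apply hew
    have : s(w, b) ∈ q.reverse.edges := by rw [hrq]; simp
    simpa using this

/-- Key lemma: if `S` is a vertex cover and a cycle in the gadget graph minus
`Sum.inl '' S` passes through an `inr` vertex, contradiction. -/
lemma no_cycle_at_inr {V : Type*} [DecidableEq V] {G : SimpleGraph V} {S : Finset V}
    (hS : IsVertexCover G S) {S' : Finset (V ⊕ G.edgeSet)}
    (hS' : ∀ a : V, Sum.inl a ∈ S' ↔ a ∈ S)
    {w : {x : V ⊕ G.edgeSet | x ∉ (S' : Set (V ⊕ G.edgeSet))}} {e : G.edgeSet}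
    (hw : w.val = inr e) {p : ((edgeGadget G).induce {x | x ∉ S'}).Walk w w}
    (hp : p.IsCycle) : False := by
  obtain ⟨x, y, hxy, hwx, hwy⟩ := cycle_two_neighbors hp
  have hwx' : (edgeGadget G).Adj w.val x.val := hwx
  have hwy' : (edgeGadget G).Adj w.val y.val := hwy
  rw [gadget_adj] at hwx' hwy'
  obtain ⟨a, e1, hae, (⟨h1, h2⟩ | ⟨h1, h2⟩)⟩ :=
    hwx'.resolve_left (by rintro ⟨a, b, h1, -, -⟩; rw [hw] at h1; exact Sum.inr_ne_inl h1)
  · rw [hw] at h1; exact Sum.inr_ne_inl h1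
  obtain ⟨b, e2, hbe, (⟨h3, h4⟩ | ⟨h3, h4⟩)⟩ :=
    hwy'.resolve_left (by rintro ⟨a, b, h1, -, -⟩; rw [hw] at h1; exact Sum.inr_ne_inl h1)
  · rw [hw] at h3; exact Sum.inr_ne_inl h3
  rw [hw] at h1 h3
  injection h1 with h1'
  injection h3 with h3'
  subst h1'; subst h3'
  have hab : a ≠ b := by
    intro h; apply hxy; apply Subtype.ext; rw [h2, h4, h]
  have heab : (e : Sym2 V) = s(a, b) := (Sym2.mem_and_mem_iff hab).mp ⟨hae, hbe⟩
  have hadj : G.Adj a b := by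
    have := e.property; rw [heab] at this; exact this
  have ha : a ∉ S := by
    have := x.property
    simp only [Set.mem_setOf_eq, h2] at this
    rwa [hS'] at this
  have hb : b ∉ S := by
    have := y.property
    simp only [Set.mem_setOf_eq, h4] at this
    rwa [hS'] at this
  rcases hS a b hadj with h | h
  exacts [ha h, hb h]

theorem vertexCover_iff_feedbackVertexSet {V : Type*} [Fintype V] [DecidableEq V]
    (G : SimpleGraph V) [DecidableRel G.Adj] (k : ℕ) :
    (∃ S : Finset V, IsVertexCover G S ∧ S.card ≤ k) ↔
    (∃ S : Finset (V ⊕ G.edgeSet),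
      ((edgeGadget G).induce {x | x ∉ S}).IsAcyclic ∧ S.card ≤ k) := by
  constructor
  · rintro ⟨S, hS, hcard⟩
    refine ⟨S.map ⟨Sum.inl, Sum.inl_injective⟩, ?_, by simpa using hcard⟩
    set S' : Finset (V ⊕ G.edgeSet) := S.map ⟨Sum.inl, Sum.inl_injective⟩ with hS'def
    have hS' : ∀ a : V, Sum.inl a ∈ S' ↔ a ∈ S := by
      intro a; simp [hS'def]
    intro v p hp
    obtain ⟨x, hvx, q, rfl⟩ := SimpleGraph.Walk.not_nil_iff.mp hp.not_nil
    have hvx' : (edgeGadget G).Adj v.val x.val := hvx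
    rw [gadget_adj] at hvx'
    rcases hvx' with ⟨a, b, ha, hb, hab⟩ | ⟨a, e, hae, (⟨h1, h2⟩ | ⟨h1, h2⟩)⟩
    · -- inl-inl edge: contradicts vertex cover
      have hva : a ∉ S := by
        have := v.property; simp only [Set.mem_setOf_eq, ha] at this; rwa [hS'] at this
      have hvb : b ∉ S := by
        have := x.property; simp only [Set.mem_setOf_eq, hb] at this; rwa [hS'] at this
      rcases hS a b hab with h | h
      exacts [hva h, hvb h]
    · -- x.val = inr e : rotate the cycle to x
      have hxs : x ∈ (SimpleGraph.Walk.cons hvx q).support := by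
        simp [SimpleGraph.Walk.support_cons]
      exact no_cycle_at_inr hS hS' h2 (hp.rotate hxs)
    · -- v.val = inr e
      exact no_cycle_at_inr hS hS' h1 hp
  · rintro ⟨S', hA, hcard⟩
    classical
    let f : V ⊕ G.edgeSet → V := Sum.elim id (fun e => (e : Sym2 V).out.1)
    refine ⟨S'.image f, ?_, (Finset.card_image_le).trans hcard⟩
    intro u v huv
    by_contra hc
    push_neg at hc
    obtain ⟨hu, hv⟩ := hc
    have he : s(u, v) ∈ G.edgeSet := huv
    set e : G.edgeSet := ⟨s(u, v), he⟩ with hedef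
    have hmem : ∀ z : V ⊕ G.edgeSet, z ∈ S' → f z ∈ S'.image f := fun z hz =>
      Finset.mem_image_of_mem f hz
    have hiu : Sum.inl u ∉ S' := fun h => hu (hmem _ h)
    have hiv : Sum.inl v ∉ S' := fun h => hv (hmem _ h)
    have hie : Sum.inr e ∉ S' := by
      intro h
      have := hmem _ h
      have hout : f (Sum.inr e) ∈ (e : Sym2 V) := Sym2.out_fst_mem _
      rw [hedef] at hout
      rcases Sym2.mem_iff.mp hout with h' | h'
      · exact hu (h' ▸ this)
      · exact hv (h' ▸ this)
    -- build the triangle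
    let H := (edgeGadget G).induce {x : V ⊕ G.edgeSet | x ∉ S'}
    let vu : {x : V ⊕ G.edgeSet | x ∉ S'} := ⟨Sum.inl u, hiu⟩
    let vv : {x : V ⊕ G.edgeSet | x ∉ S'} := ⟨Sum.inl v, hiv⟩
    let ve : {x : V ⊕ G.edgeSet | x ∉ S'} := ⟨Sum.inr e, hie⟩
    have h1 : H.Adj vu vv := by
      show (edgeGadget G).Adj (Sum.inl u) (Sum.inl v)
      exact gadget_adj.mpr (Or.inl ⟨u, v, rfl, rfl, huv⟩)
    have h2 : H.Adj vv ve := by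
      show (edgeGadget G).Adj (Sum.inl v) (Sum.inr e)
      exact gadget_adj.mpr (Or.inr ⟨v, e, by simp [hedef], Or.inl ⟨rfl, rfl⟩⟩)
    have h3 : H.Adj ve vu := by
      show (edgeGadget G).Adj (Sum.inr e) (Sum.inl u)
      exact gadget_adj.mpr (Or.inr ⟨u, e, by simp [hedef], Or.inr ⟨rfl, rfl⟩⟩)
    have hcyc : (SimpleGraph.Walk.cons h1 (SimpleGraph.Walk.cons h2
        (SimpleGraph.Walk.cons h3 SimpleGraph.Walk.nil))).IsCycle := by
      rw [SimpleGraph.Walk.cons_isCycle_iff]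
      constructor
      · rw [SimpleGraph.Walk.cons_isPath_iff]
        constructor
        · rw [SimpleGraph.Walk.cons_isPath_iff]
          refine ⟨SimpleGraph.Walk.IsPath.nil, ?_⟩
          simp only [SimpleGraph.Walk.support_nil, List.mem_singleton]
          intro h; exact Sum.inr_ne_inl (congrArg Subtype.val h)
        · simp only [SimpleGraph.Walk.support_cons, SimpleGraph.Walk.support_nil,
            List.mem_cons, List.mem_singleton, List.not_mem_nil, or_false]
          rintro (h | h)
          · exact Sum.inl_ne_inr (congrArg Subtype.val h)
          · exact huv.ne' (Sum.inl_injective (congrArg Subtype.val h))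
      · simp only [SimpleGraph.Walk.edges_cons, SimpleGraph.Walk.edges_nil,
          List.mem_cons, List.not_mem_nil, or_false]
        rintro (h | h) <;> rw [Sym2.eq_iff] at h
        · rcases h with ⟨h, -⟩ | ⟨h, -⟩
          · exact huv.ne (Sum.inl_injective (congrArg Subtype.val h))
          · exact Sum.inl_ne_inr (congrArg Subtype.val h)
        · rcases h with ⟨h, -⟩ | ⟨-, h⟩
          · exact Sum.inl_ne_inr (congrArg Subtype.val h)
          · exact Sum.inl_ne_inr (congrArg Subtype.val h)
    exact hA _ hcyc
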